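/- Let X = E ⊕ F be a direct sum decomposition of a Banach space with E finite-dimensional, P the bounded projection onto E along F, and Q = I − P. Suppose E∖{0} ⊆ Int C and F ∩ C = {0} for a closed cone C of rank k = dim E. Then there exists a constant C₁ > 0 such that every nonzero v ∈ X with ‖P v‖ ≥ C₁ ‖Q v‖ lies in Int C. -/

import Mathlib

open Pointwise


/-- Let `X = E ⊕ F` with `E` finite dimensional of dimension `k`, `P` the bounded
projection onto `E` along `F` and `Q = I - P`.  If `E \ {0} ⊆ interior C` and
`F ∩ C = {0}` for a closed cone `C` of rank `k`, then there is `C₁ > 0` such that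
every nonzero `v` with `‖P v‖ ≥ C₁ ‖Q v‖` lies in the interior of `C`. -/
theorem projection_ratio_implies_interior
    {X : Type*} [NormedAddCommGroup X] [NormedSpace ℝ X] [CompleteSpace X]
    (C : Set X) (hCcl : IsClosed C)
    (hCcone : ∀ l : ℝ, ∀ v ∈ C, l • v ∈ C)
    (k : ℕ) (hk : 1 ≤ k)
    (E F : Submodule ℝ X) (hEF : IsCompl E F) (hFcl : IsClosed (F : Set X))
    (hEdim : Module.finrank ℝ E = k)
    (hEC : (E : Set X) \ {0} ⊆ interior C)
    (hFC : (F : Set X) ∩ C = {0})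
    (P : X →L[ℝ] X)
    (hPE : ∀ v : X, P v ∈ E) (hPproj : ∀ v ∈ E, P v = v)
    (hPker : ∀ v : X, v - P v ∈ F) :
    ∃ C₁ > 0, ∀ v : X, v ≠ 0 → C₁ * ‖v - P v‖ ≤ ‖P v‖ → v ∈ interior C := by
  haveI : FiniteDimensional ℝ E := FiniteDimensional.of_finrank_pos (by omega)
  set s : Set X := (↑) '' (Metric.sphere (0 : E) 1) with hs_def
  have hs_comp : IsCompact s := (isCompact_sphere (0 : E) 1).image continuous_subtype_val
  have hs_sub : s ⊆ interior C := by
    rintro x ⟨y, hy, rfl⟩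
    have hy1 : ‖y‖ = 1 := by simpa using hy
    refine hEC ⟨y.2, ?_⟩
    simp only [Set.mem_singleton_iff]
    intro h
    have hy0 : y = 0 := Subtype.ext h
    rw [hy0] at hy1
    simp at hy1
  obtain ⟨δ, hδ, hthick⟩ := hs_comp.exists_thickening_subset_open isOpen_interior hs_sub
  refine ⟨2 / δ, by positivity, fun v hv hle => ?_⟩
  have hPv : P v ≠ 0 := by
    intro h
    apply hv
    rw [h, sub_zero, norm_zero] at hle
    have h2δ : (0:ℝ) < 2 / δ := by positivity
    have h2 : ‖v‖ ≤ 0 := by nlinarith [norm_nonneg v]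
    exact norm_le_zero_iff.mp h2
  have hc : (0:ℝ) < ‖P v‖ := norm_pos_iff.mpr hPv
  set c : ℝ := ‖P v‖ with hc_def
  -- the normalized vector lies in the thickening of s
  have hw : c⁻¹ • v ∈ Metric.thickening δ s := by
    rw [Metric.mem_thickening_iff]
    refine ⟨c⁻¹ • P v, ⟨(⟨c⁻¹ • P v, E.smul_mem _ (hPE v)⟩ : E), ?_, rfl⟩, ?_⟩
    · simp only [mem_sphere_iff_norm, sub_zero]
      show ‖c⁻¹ • P v‖ = 1
      rw [norm_smul, norm_inv, Real.norm_eq_abs, abs_of_pos hc]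
      exact inv_mul_cancel₀ (ne_of_gt hc)
    · rw [dist_eq_norm, ← smul_sub, norm_smul, norm_inv, Real.norm_eq_abs, abs_of_pos hc]
      have hle' : ‖v - P v‖ ≤ δ / 2 * c := by
        rw [div_mul_eq_mul_div, div_le_iff₀ hδ] at hle
        nlinarith
      calc c⁻¹ * ‖v - P v‖ ≤ c⁻¹ * (δ / 2 * c) := by
            apply mul_le_mul_of_nonneg_left hle' (by positivity)
        _ = δ / 2 := by field_simp
        _ < δ := by linarith
  have hwint : c⁻¹ • v ∈ interior C := hthick hw
  -- scale back
  have hsub : c • interior C ⊆ interior C := by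
    have h1 : c • C ⊆ C := by
      rintro _ ⟨x, hx, rfl⟩; exact hCcone c x hx
    calc c • interior C = interior (c • C) := (interior_smul₀ (ne_of_gt hc) C).symm
      _ ⊆ interior C := interior_mono h1
  have : v = c • (c⁻¹ • v) := (smul_inv_smul₀ (ne_of_gt hc) v).symm
  rw [this]
  exact hsub (Set.smul_mem_smul_set hwint)
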